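/- (Legendre, 1798) Let x be an irrational real number with convergents p_n/q_n. If p ∈ ℤ and q ∈ ℕ, q ≥ 1, are coprime and satisfy |x − p/q| < 1/(2q²), then there exists n ≥ 0 such that p = p_n and q = q_n, where n is the unique index with q_n ≤ q < q_{n+1}. -/

import Mathlib

/-- The complete quotients of a real number `x`:
`cq x 0 = x` and `cq x (n+1) = 1 / (cq x n - ⌊cq x n⌋)`. -/
noncomputable def cq (x : ℝ) : ℕ → ℝ
  | 0 => x
  | n + 1 => (Int.fract (cq x n))⁻¹

/-- The partial quotients of a real number `x`: `pq x n = ⌊cq x n⌋`. -/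
noncomputable def pq (x : ℝ) (n : ℕ) : ℤ := ⌊cq x n⌋

lemma cq_irrational {x : ℝ} (hx : Irrational x) : ∀ n, Irrational (cq x n)
  | 0 => hx
  | n + 1 => by
      have h := cq_irrational hx n
      show Irrational (Int.fract (cq x n))⁻¹
      have : Irrational (Int.fract (cq x n)) := by
        rw [Int.fract]; exact Irrational.sub_intCast h _
      exact this.inv

lemma fract_cq_pos {x : ℝ} (hx : Irrational x) (n : ℕ) : 0 < Int.fract (cq x n) :=
  Int.fract_pos.mpr (fun h => ((cq_irrational hx n).ne_int ⌊cq x n⌋) h)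

lemma one_lt_cq {x : ℝ} (hx : Irrational x) (n : ℕ) : 1 < cq x (n + 1) :=
  (one_lt_inv₀ (fract_cq_pos hx n)).mpr (Int.fract_lt_one _)

lemma one_le_pq {x : ℝ} (hx : Irrational x) (n : ℕ) : 1 ≤ pq x (n + 1) :=
  Int.le_floor.mpr (by exact_mod_cast (one_lt_cq hx n).le)

lemma cq_eq {x : ℝ} (hx : Irrational x) (n : ℕ) :
    cq x n = (pq x n : ℝ) + (cq x (n + 1))⁻¹ := by
  have h : cq x (n+1) = (Int.fract (cq x n))⁻¹ := rfl
  rw [h, inv_inv, pq, Int.fract]; ring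

lemma abs_le_abs_add_of_mul_nonneg {u v : ℝ} (h : 0 ≤ u * v) : |u| ≤ |u + v| := by
  rcases le_or_gt 0 u with h1 | h1
  · rcases le_or_gt 0 v with h2 | h2
    · rw [abs_of_nonneg h1, abs_of_nonneg (by linarith)]; linarith
    · have hu : u = 0 := by nlinarith
      simp [hu]
  · rcases le_or_gt 0 v with h2 | h2
    · have : v = 0 := by nlinarith
      simp [this]
    · rw [abs_of_neg h1, abs_of_neg (by linarith)]; linarith

set_option maxHeartbeats 1000000 in
/-- Legendre, 1798.  `P (n+2)`, `Q (n+2)` are the numerator `p_n` and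
denominator `q_n` of the `n`-th convergent of `x` (so `P 0 = p_{-2} = 0`, etc.). -/
theorem stmt1 (x : ℝ) (hx : Irrational x)
    (P Q : ℕ → ℤ)
    (hP0 : P 0 = 0) (hP1 : P 1 = 1) (hQ0 : Q 0 = 1) (hQ1 : Q 1 = 0)
    (hP : ∀ n, P (n + 2) = pq x n * P (n + 1) + P n)
    (hQ : ∀ n, Q (n + 2) = pq x n * Q (n + 1) + Q n)
    (p : ℤ) (q : ℕ) (hq : 1 ≤ q) (hcop : IsCoprime p (q : ℤ))
    (happrox : |x - (p : ℝ) / (q : ℝ)| < 1 / (2 * (q : ℝ) ^ 2)) :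
    ∃ n : ℕ, p = P (n + 2) ∧ (q : ℤ) = Q (n + 2) ∧
      Q (n + 2) ≤ (q : ℤ) ∧ (q : ℤ) < Q (n + 3) := by
  -- basic facts about Q
  have hQbasic : ∀ n, 1 ≤ Q (n + 2) ∧ 0 ≤ Q (n + 1) := by
    intro n
    induction n with
    | zero => rw [hQ 0, hQ1, hQ0]; norm_num
    | succ m ih =>
        obtain ⟨h1, h2⟩ := ih
        refine ⟨?_, by linarith⟩
        rw [hQ (m+1)]
        have := one_le_pq hx m
        nlinarith
  have hQ1le : ∀ n, 1 ≤ Q (n + 2) := fun n => (hQbasic n).1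
  have hQ0le : ∀ n, 0 ≤ Q (n + 1) := fun n => (hQbasic n).2
  -- growth
  have hQgrow : ∀ n : ℕ, (n : ℤ) < Q (n + 3) := by
    intro n
    induction n with
    | zero => have h := hQ1le 1; norm_num at h ⊢; omega
    | succ m ih =>
        rw [hQ (m + 2)]
        have h1 := one_le_pq hx (m + 1)
        have h2 := hQ1le (m + 1)
        have h3 := hQ1le m
        push_cast
        nlinarith
  -- the fundamental identity x * (ω_n q_{n-1} + q_{n-2}) = ω_n p_{n-1} + p_{n-2}
  have hA : ∀ n, x * (cq x n * (Q (n + 1) : ℝ) + (Q n : ℝ))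
      = cq x n * (P (n + 1) : ℝ) + (P n : ℝ) := by
    intro n
    induction n with
    | zero =>
        have h0 : cq x 0 = x := rfl
        rw [hP0, hP1, hQ0, hQ1, h0]; push_cast; ring
    | succ m ih =>
        have hω : (1:ℝ) < cq x (m + 1) := one_lt_cq hx m
        have hωne : cq x (m + 1) ≠ 0 := by linarith
        have hkey := cq_eq hx m
        rw [hkey] at ih
        rw [hP m, hQ m]
        push_cast
        field_simp at ih ⊢
        linear_combination ih
  -- positivity of the denominators
  have hD : ∀ n, 0 < cq x n * (Q (n + 1) : ℝ) + (Q n : ℝ) := by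
    intro n
    cases n with
    | zero => rw [hQ0, hQ1]; norm_num
    | succ m =>
        have h1 : (1:ℝ) < cq x (m + 1) := one_lt_cq hx m
        have h2 : (1:ℤ) ≤ Q (m + 2) := hQ1le m
        have h3 : (0:ℤ) ≤ Q (m + 1) := hQ0le m
        have h2' : (1:ℝ) ≤ (Q (m+2) : ℝ) := by exact_mod_cast h2
        have h3' : (0:ℝ) ≤ (Q (m+1) : ℝ) := by exact_mod_cast h3
        nlinarith
  -- determinant identity
  have hdet : ∀ n, P (n + 1) * Q n - P n * Q (n + 1) = (-1) ^ n := by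
    intro n
    induction n with
    | zero => rw [hP0, hP1, hQ0, hQ1]; norm_num
    | succ m ih =>
        rw [hP m, hQ m, pow_succ]
        linear_combination (-1 : ℤ) * ih
  -- the error terms
  set E : ℕ → ℝ := fun n => (Q (n + 2) : ℝ) * x - (P (n + 2) : ℝ) with hE_def
  have hE : ∀ n, E n = (-1) ^ n / (cq x (n + 1) * (Q (n + 2) : ℝ) + (Q (n + 1) : ℝ)) := by
    intro n
    have hDn := hD (n + 1)
    rw [hE_def]
    rw [eq_div_iff (ne_of_gt hDn)]
    have h1 := hA (n + 1)
    have h2 : ((P (n + 2) : ℝ) * (Q (n + 1) : ℝ) - (P (n + 1) : ℝ) * (Q (n + 2) : ℝ))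
        = (-1 : ℝ) ^ (n + 1) := by exact_mod_cast congrArg (Int.cast : ℤ → ℝ) (hdet (n + 1))
    linear_combination (Q (n + 2) : ℝ) * h1 - h2
  have hEne : ∀ n, E n ≠ 0 := by
    intro n
    rw [hE n]
    apply div_ne_zero
    · positivity
    · exact ne_of_gt (hD (n + 1))
  have hEsign : ∀ n, E n * E (n + 1) < 0 := by
    intro n
    rw [hE n, hE (n + 1), div_mul_div_comm]
    apply div_neg_of_neg_of_pos
    · have : (-1 : ℝ) ^ n * (-1) ^ (n + 1) = -(((-1 : ℝ) ^ n) ^ 2) := by ring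
      rw [this]
      have : ((-1 : ℝ) ^ n) ^ 2 = 1 := by
        rw [← pow_mul, mul_comm, pow_mul]; norm_num
      rw [this]; norm_num
    · exact mul_pos (hD (n + 1)) (hD (n + 2))
  -- best approximation property
  have hbest : ∀ n, ∀ p' q' : ℤ, 1 ≤ q' → q' < Q (n + 3) →
      |E n| ≤ |(q' : ℝ) * x - (p' : ℝ)| := by
    intro n p' q' hq1 hq2
    set d : ℤ := (-1) ^ n with hd_def
    have hd2 : d * d = 1 := by rw [hd_def, ← pow_add, ← two_mul, pow_mul]; norm_num
    have hdet2 : P (n + 3) * Q (n + 2) - P (n + 2) * Q (n + 3) = d := by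
      have := hdet (n + 2)
      rw [hd_def]
      rw [this, pow_succ, pow_succ]; ring
    set a : ℤ := d * (P (n + 3) * q' - Q (n + 3) * p') with ha_def
    set b : ℤ := d * (Q (n + 2) * p' - P (n + 2) * q') with hb_def
    have hpa : a * P (n + 2) + b * P (n + 3) = p' := by
      rw [ha_def, hb_def]
      linear_combination d * p' * hdet2 + p' * hd2
    have hqa : a * Q (n + 2) + b * Q (n + 3) = q' := by
      rw [ha_def, hb_def]
      linear_combination d * q' * hdet2 + q' * hd2
    have hQ2 := hQ1le n
    have hQ3 := hQ1le (n + 1)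
    have hcomb : (q' : ℝ) * x - (p' : ℝ) = (a : ℝ) * E n + (b : ℝ) * E (n + 1) := by
      have h1 : (a : ℝ) * (P (n + 2) : ℝ) + (b : ℝ) * (P (n + 3) : ℝ) = (p' : ℝ) := by
        exact_mod_cast hpa
      have h2 : (a : ℝ) * (Q (n + 2) : ℝ) + (b : ℝ) * (Q (n + 3) : ℝ) = (q' : ℝ) := by
        exact_mod_cast hqa
      simp only [hE_def]
      linear_combination h1 - x * h2
    by_cases hb0 : b = 0
    · -- q' = a * Q(n+2), so |q'x - p'| = |a| |E n| with |a| ≥ 1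
      have ha0 : a ≠ 0 := by
        intro h; rw [h, hb0] at hqa; simp at hqa; omega
      have ha1 : (1 : ℝ) ≤ |(a : ℝ)| := by
        rw [← Int.cast_abs]; exact_mod_cast Int.one_le_abs ha0
      rw [hcomb, hb0]
      push_cast
      rw [zero_mul, add_zero, abs_mul]
      nlinarith [abs_nonneg (E n), abs_nonneg ((a:ℝ))]
    · by_cases ha0 : a = 0
      · -- q' = b Q(n+3) ≥ Q(n+3), contradiction
        exfalso
        rw [ha0, zero_mul, zero_add] at hqa
        have hb1 : 1 ≤ b := by nlinarith
        nlinarith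
      · -- a, b have opposite signs
        have hab : a * b < 0 := by
          rcases lt_or_gt_of_ne ha0 with ha | ha <;> rcases lt_or_gt_of_ne hb0 with hb | hb
          · exfalso; nlinarith
          · nlinarith
          · nlinarith
          · exfalso; nlinarith
        have hmul : 0 ≤ ((a : ℝ) * E n) * ((b : ℝ) * E (n + 1)) := by
          have h1 : ((a : ℝ) * (b : ℝ)) < 0 := by exact_mod_cast hab
          nlinarith [hEsign n]
        have ha1 : (1 : ℝ) ≤ |(a : ℝ)| := by
          rw [← Int.cast_abs]; exact_mod_cast Int.one_le_abs ha0
        rw [hcomb]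
        calc |E n| ≤ |(a : ℝ) * E n| := by
              rw [abs_mul]; exact le_mul_of_one_le_left (abs_nonneg _) ha1
          _ ≤ |(a : ℝ) * E n + (b : ℝ) * E (n + 1)| := abs_le_abs_add_of_mul_nonneg hmul
  -- choose the index n
  have hqZ : (1 : ℤ) ≤ (q : ℤ) := by exact_mod_cast hq
  have hex : ∃ n : ℕ, (q : ℤ) < Q (n + 3) := ⟨q, by exact_mod_cast hQgrow q⟩
  classical
  set n := Nat.find hex with hn_def
  have hhigh : (q : ℤ) < Q (n + 3) := Nat.find_spec hex
  have hlow : Q (n + 2) ≤ (q : ℤ) := by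
    rcases Nat.eq_zero_or_pos n with h0 | h0
    · rw [h0]
      have : Q 2 = 1 := by rw [hQ 0, hQ1, hQ0]; ring
      rw [this]; exact hqZ
    · have hm : n - 1 < Nat.find hex := by rw [← hn_def]; omega
      have hmin := Nat.find_min hex hm
      push_neg at hmin
      have h3 : n - 1 + 3 = n + 2 := by omega
      rwa [h3] at hmin
  -- convert the approximation hypothesis
  have hq0 : (0 : ℝ) < (q : ℝ) := by exact_mod_cast hq
  have happrox2 : |(q : ℝ) * x - (p : ℝ)| < 1 / (2 * (q : ℝ)) := by
    have h1 : (q : ℝ) * x - (p : ℝ) = (q : ℝ) * (x - (p : ℝ) / (q : ℝ)) := by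
      field_simp
    rw [h1, abs_mul, abs_of_pos hq0]
    calc (q : ℝ) * |x - (p : ℝ) / (q : ℝ)| < (q : ℝ) * (1 / (2 * (q : ℝ) ^ 2)) :=
          mul_lt_mul_of_pos_left happrox hq0
      _ = 1 / (2 * (q : ℝ)) := by field_simp
  have hba : |E n| ≤ |(q : ℝ) * x - (p : ℝ)| := hbest n p (q : ℤ) hqZ hhigh
  -- the cross-product identity
  have hcross : p * Q (n + 2) = P (n + 2) * (q : ℤ) := by
    by_contra hne
    have h1 : (1 : ℤ) ≤ |p * Q (n + 2) - P (n + 2) * (q : ℤ)| :=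
      Int.one_le_abs (sub_ne_zero.mpr hne)
    have h1' : (1 : ℝ) ≤ |(p : ℝ) * (Q (n + 2) : ℝ) - (P (n + 2) : ℝ) * (q : ℝ)| := by
      exact_mod_cast h1
    have hid : (p : ℝ) * (Q (n + 2) : ℝ) - (P (n + 2) : ℝ) * (q : ℝ)
        = (q : ℝ) * E n - (Q (n + 2) : ℝ) * ((q : ℝ) * x - (p : ℝ)) := by
      rw [hE_def]; ring
    have hQle : (Q (n + 2) : ℝ) ≤ (q : ℝ) := by exact_mod_cast hlow
    have hQpos : (0 : ℝ) ≤ (Q (n + 2) : ℝ) := by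
      exact_mod_cast (by linarith [hQ1le n] : (0 : ℤ) ≤ Q (n + 2))
    have habs : |(p : ℝ) * (Q (n + 2) : ℝ) - (P (n + 2) : ℝ) * (q : ℝ)| < 1 := by
      rw [hid]
      calc |(q : ℝ) * E n - (Q (n + 2) : ℝ) * ((q : ℝ) * x - (p : ℝ))|
          ≤ |(q : ℝ) * E n| + |(Q (n + 2) : ℝ) * ((q : ℝ) * x - (p : ℝ))| := abs_sub _ _
        _ = (q : ℝ) * |E n| + (Q (n + 2) : ℝ) * |(q : ℝ) * x - (p : ℝ)| := by
              rw [abs_mul, abs_mul, abs_of_pos hq0, abs_of_nonneg hQpos]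
        _ < 1 := by
              have e1 : (q : ℝ) * |E n| ≤ (q : ℝ) * |(q : ℝ) * x - (p : ℝ)| :=
                mul_le_mul_of_nonneg_left hba hq0.le
              have e2 : (q : ℝ) * |(q : ℝ) * x - (p : ℝ)| < (q : ℝ) * (1 / (2 * (q : ℝ))) :=
                mul_lt_mul_of_pos_left happrox2 hq0
              have e3 : (q : ℝ) * (1 / (2 * (q : ℝ))) = 1 / 2 := by field_simp
              have e4 : (Q (n + 2) : ℝ) * |(q : ℝ) * x - (p : ℝ)| ≤ (q : ℝ) * |(q : ℝ) * x - (p : ℝ)| :=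
                mul_le_mul_of_nonneg_right hQle (abs_nonneg _)
              linarith
    linarith
  -- conclude
  have hqdvd : (q : ℤ) ∣ Q (n + 2) := by
    have hd : (q : ℤ) ∣ p * Q (n + 2) := ⟨P (n + 2), by linarith [hcross]⟩
    exact hcop.symm.dvd_of_dvd_mul_left hd
  have hQeq : Q (n + 2) = (q : ℤ) := by
    have h1 : (q : ℤ) ≤ Q (n + 2) := Int.le_of_dvd (by linarith [hQ1le n]) hqdvd
    omega
  have hpeq : p = P (n + 2) := by
    have : p * (q : ℤ) = P (n + 2) * (q : ℤ) := by rw [hQeq] at hcross; exact hcross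
    exact mul_right_cancel₀ (by omega) this
  exact ⟨n, hpeq, hQeq.symm, le_of_eq hQeq, hhigh⟩
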